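/- Let p₁, p₂ be finitely supported probability distributions over multiplicities and define their sum (p₁ ⊕ p₂)(m) = ∑_{m = m₁ ⊕ m₂} p₁(m₁)·p₂(m₂). Then for every process distance e, pda(p₁ ⊕ p₂, e) = pda(p₁,e) + pda(p₂,e) - pda(p₁,e)·pda(p₂,e); in particular pda(p₁ ⊕ p₂, e) ≤ pda(p₁,e) + pda(p₂,e). -/
import Mathlib


/-- Deterministic distance approximation from above. -/
noncomputable def dda {V : Type*} (m : V →₀ ℕ) (e : V → ℝ) : ℝ :=
  1 - ∏ x ∈ m.support, (1 - e x) ^ (m x)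

/-- Probabilistic distance approximation from above. -/
noncomputable def pda {V : Type*} (p : (V →₀ ℕ) →₀ ℝ) (e : V → ℝ) : ℝ :=
  ∑ m ∈ p.support, p m * dda m e

/-- Convolution of distributions over multiplicities along pointwise sum. -/
noncomputable def convSum {V : Type*} (p₁ p₂ : (V →₀ ℕ) →₀ ℝ) : (V →₀ ℕ) →₀ ℝ :=
  p₁.sum fun m₁ w₁ => p₂.sum fun m₂ w₂ => Finsupp.single (m₁ + m₂) (w₁ * w₂)

noncomputable def prodF {V : Type*} (m : V →₀ ℕ) (e : V → ℝ) : ℝ :=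
  ∏ x ∈ m.support, (1 - e x) ^ (m x)

lemma prodF_eq_prod_subset {V : Type*} (m : V →₀ ℕ) (e : V → ℝ) (s : Finset V)
    (hs : m.support ⊆ s) : prodF m e = ∏ x ∈ s, (1 - e x) ^ (m x) := by
  rw [prodF]
  refine Finset.prod_subset hs ?_
  intro x _ hx
  simp [Finsupp.notMem_support_iff.mp hx]

lemma prodF_add {V : Type*} (m₁ m₂ : V →₀ ℕ) (e : V → ℝ) :
    prodF (m₁ + m₂) e = prodF m₁ e * prodF m₂ e := by
  classical
  have h1 : m₁.support ⊆ m₁.support ∪ m₂.support := Finset.subset_union_left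
  have h2 : m₂.support ⊆ m₁.support ∪ m₂.support := Finset.subset_union_right
  have h12 : (m₁ + m₂).support ⊆ m₁.support ∪ m₂.support := Finsupp.support_add
  rw [prodF_eq_prod_subset _ e _ h12, prodF_eq_prod_subset m₁ e _ h1,
    prodF_eq_prod_subset m₂ e _ h2, ← Finset.prod_mul_distrib]
  refine Finset.prod_congr rfl fun x _ => ?_
  simp [pow_add]

lemma dda_add {V : Type*} (m₁ m₂ : V →₀ ℕ) (e : V → ℝ) :
    dda (m₁ + m₂) e = dda m₁ e + dda m₂ e - dda m₁ e * dda m₂ e := by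
  have h := prodF_add m₁ m₂ e
  simp only [dda, prodF] at *
  rw [h]; ring

lemma dda_nonneg {V : Type*} (m : V →₀ ℕ) (e : V → ℝ)
    (he0 : ∀ x, 0 ≤ e x) (he1 : ∀ x, e x < 1) : 0 ≤ dda m e := by
  have : ∏ x ∈ m.support, (1 - e x) ^ (m x) ≤ 1 := by
    apply Finset.prod_le_one
    · intro x _; exact pow_nonneg (by linarith [he1 x]) _
    · intro x _
      exact pow_le_one₀ (by linarith [he1 x]) (by linarith [he0 x])
  simp only [dda]; linarith

lemma pda_nonneg {V : Type*} (p : (V →₀ ℕ) →₀ ℝ) (e : V → ℝ)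
    (hp0 : ∀ m, 0 ≤ p m) (he0 : ∀ x, 0 ≤ e x) (he1 : ∀ x, e x < 1) : 0 ≤ pda p e := by
  apply Finset.sum_nonneg
  intro m _
  exact mul_nonneg (hp0 m) (dda_nonneg m e he0 he1)

theorem pda_convSum {V : Type*}
    (p₁ p₂ : (V →₀ ℕ) →₀ ℝ)
    (hp₁0 : ∀ m, 0 ≤ p₁ m) (hp₁1 : ∑ m ∈ p₁.support, p₁ m = 1)
    (hp₂0 : ∀ m, 0 ≤ p₂ m) (hp₂1 : ∑ m ∈ p₂.support, p₂ m = 1)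
    (e : V → ℝ) (he0 : ∀ x, 0 ≤ e x) (he1 : ∀ x, e x < 1) :
    pda (convSum p₁ p₂) e = pda p₁ e + pda p₂ e - pda p₁ e * pda p₂ e ∧
    pda (convSum p₁ p₂) e ≤ pda p₁ e + pda p₂ e := by
  classical
  have h0 : ∀ m : V →₀ ℕ, (0 : ℝ) * dda m e = 0 := fun m => by ring
  have hadd : ∀ (m : V →₀ ℕ) (b₁ b₂ : ℝ),
      (b₁ + b₂) * dda m e = b₁ * dda m e + b₂ * dda m e := fun m b₁ b₂ => by ring
  have key : pda (convSum p₁ p₂) e = pda p₁ e + pda p₂ e - pda p₁ e * pda p₂ e := by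
    have hpda : pda (convSum p₁ p₂) e
        = (convSum p₁ p₂).sum (fun m w => w * dda m e) := rfl
    rw [hpda, convSum, Finsupp.sum_sum_index h0 hadd]
    have : (p₁.sum fun m₁ w₁ =>
        (p₂.sum fun m₂ w₂ => Finsupp.single (m₁ + m₂) (w₁ * w₂)).sum
          fun m w => w * dda m e)
        = p₁.sum fun m₁ w₁ => p₂.sum fun m₂ w₂ => (w₁ * w₂) * dda (m₁ + m₂) e := by
      refine Finsupp.sum_congr fun m₁ _ => ?_
      rw [Finsupp.sum_sum_index h0 hadd]
      refine Finsupp.sum_congr fun m₂ _ => ?_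
      rw [Finsupp.sum_single_index (h0 _)]
    rw [this]
    simp only [Finsupp.sum, dda_add]
    have inner : ∀ m₁ ∈ p₁.support,
        (∑ m₂ ∈ p₂.support, (p₁ m₁ * p₂ m₂) *
          (dda m₁ e + dda m₂ e - dda m₁ e * dda m₂ e))
        = p₁ m₁ * dda m₁ e + p₁ m₁ * pda p₂ e - p₁ m₁ * dda m₁ e * pda p₂ e := by
      intro m₁ _
      have : ∀ m₂ : V →₀ ℕ, (p₁ m₁ * p₂ m₂) *
          (dda m₁ e + dda m₂ e - dda m₁ e * dda m₂ e)
          = p₁ m₁ * dda m₁ e * p₂ m₂ + p₁ m₁ * (p₂ m₂ * dda m₂ e)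
            - p₁ m₁ * dda m₁ e * (p₂ m₂ * dda m₂ e) := fun m₂ => by ring
      simp only [this, Finset.sum_sub_distrib, Finset.sum_add_distrib,
        ← Finset.mul_sum, hp₂1, mul_one, pda]
    rw [Finset.sum_congr rfl inner]
    simp only [Finset.sum_sub_distrib, Finset.sum_add_distrib, ← Finset.sum_mul,
      ← Finset.mul_sum, hp₁1, one_mul]
    rw [show (∑ x ∈ p₁.support, p₁ x * dda x e) = pda p₁ e from rfl]
  refine ⟨key, ?_⟩
  rw [key]
  have h1 := pda_nonneg p₁ e hp₁0 he0 he1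
  have h2 := pda_nonneg p₂ e hp₂0 he0 he1
  nlinarith
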